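/- Let K ⊆ ℝⁿ be a self-dual proper cone, C = 𝕊^{n-1} ∩ int(K), and A ∈ ℝ^{n×n} a symmetric matrix. If the quadratic function q_A : C → ℝ, q_A(x) = ⟨Ax, x⟩, is spherically quasi-convex, then A has the K-Z-property, i.e., ⟨Ax, y⟩ ≤ 0 for all x ∈ K and y ∈ K* with ⟨x, y⟩ = 0. -/

import Mathlib

open scoped InnerProductSpace

/-- The (constant-speed) parametrization on `[0,1]` of the minimal geodesic segment of the
unit sphere joining `x` to a non-antipodal point `y`, namely
`t ↦ (cos(t·d(x,y)) - ⟪x,y⟫ sin(t·d(x,y))/√(1-⟪x,y⟫²)) • x + (sin(t·d(x,y))/√(1-⟪x,y⟫²)) • y`,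
where `d(x,y) = arccos ⟪x,y⟫` is the intrinsic distance on the sphere. -/
noncomputable def geoSeg {n : ℕ} (x y : EuclideanSpace ℝ (Fin n)) (t : ℝ) :
    EuclideanSpace ℝ (Fin n) :=
  (Real.cos (t * Real.arccos ⟪x, y⟫_ℝ) -
      ⟪x, y⟫_ℝ * Real.sin (t * Real.arccos ⟪x, y⟫_ℝ) / Real.sqrt (1 - ⟪x, y⟫_ℝ ^ 2)) • x +
    (Real.sin (t * Real.arccos ⟪x, y⟫_ℝ) / Real.sqrt (1 - ⟪x, y⟫_ℝ ^ 2)) • y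

/-- `γ`, parametrized (with constant speed) on `[0,1]`, is a minimal geodesic segment of the
unit sphere joining `x` to `y`.  For `y ≠ -x` it is the unique such segment `geoSeg x y`
(which is constantly `x` when `y = x`); for `y = -x` it is
`t ↦ cos(tπ) • x + sin(tπ) • v` for some unit vector `v` orthogonal to `x`. -/
def IsMinGeodesic {n : ℕ} (γ : ℝ → EuclideanSpace ℝ (Fin n))
    (x y : EuclideanSpace ℝ (Fin n)) : Prop :=
  ‖x‖ = 1 ∧ ‖y‖ = 1 ∧
    ((y ≠ -x ∧ γ = geoSeg x y) ∨
      (y = -x ∧ ∃ v : EuclideanSpace ℝ (Fin n), ‖v‖ = 1 ∧ ⟪x, v⟫_ℝ = 0 ∧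
        γ = fun t => Real.cos (t * Real.pi) • x + Real.sin (t * Real.pi) • v))

/-- A subset of the unit sphere is spherically convex if it contains every minimal geodesic
segment joining any two of its points. -/
def SphericallyConvex {n : ℕ} (C : Set (EuclideanSpace ℝ (Fin n))) : Prop :=
  ∀ x ∈ C, ∀ y ∈ C, ∀ γ : ℝ → EuclideanSpace ℝ (Fin n),
    IsMinGeodesic γ x y → ∀ t ∈ Set.Icc (0 : ℝ) 1, γ t ∈ C

/-- `f` is spherically quasi-convex on `C`: along every minimal geodesic segment lying in `C`,
the composition with `f` is quasi-convex, i.e. `f(γ t) ≤ max (f(γ t₁)) (f(γ t₂))` for all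
`t ∈ [t₁, t₂]`. -/
def SphQuasiConvexOn {n : ℕ} (C : Set (EuclideanSpace ℝ (Fin n)))
    (f : EuclideanSpace ℝ (Fin n) → ℝ) : Prop :=
  ∀ x ∈ C, ∀ y ∈ C, ∀ γ : ℝ → EuclideanSpace ℝ (Fin n),
    IsMinGeodesic γ x y → (∀ t ∈ Set.Icc (0 : ℝ) 1, γ t ∈ C) →
    ∀ t₁ t t₂ : ℝ, 0 ≤ t₁ → t₁ ≤ t → t ≤ t₂ → t₂ ≤ 1 →
      f (γ t) ≤ max (f (γ t₁)) (f (γ t₂))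

/-- Multiplication of an `n × n` real matrix with a vector of `EuclideanSpace ℝ (Fin n)`. -/
noncomputable def mulVecE {n : ℕ} (A : Matrix (Fin n) (Fin n) ℝ)
    (x : EuclideanSpace ℝ (Fin n)) : EuclideanSpace ℝ (Fin n) :=
  WithLp.toLp 2 (fun i => ∑ j, A i j * x j)

open Real

section helpers

variable {n : ℕ} {A : Matrix (Fin n) (Fin n) ℝ}

lemma mulVecE_apply (A : Matrix (Fin n) (Fin n) ℝ) (x : EuclideanSpace ℝ (Fin n)) (i : Fin n) :
    mulVecE A x i = ∑ j, A i j * x j := rfl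

lemma mulVecE_add (A : Matrix (Fin n) (Fin n) ℝ) (x y : EuclideanSpace ℝ (Fin n)) :
    mulVecE A (x + y) = mulVecE A x + mulVecE A y := by
  ext i
  simp [mulVecE, PiLp.add_apply, mul_add, Finset.sum_add_distrib]

lemma mulVecE_smul (A : Matrix (Fin n) (Fin n) ℝ) (s : ℝ) (x : EuclideanSpace ℝ (Fin n)) :
    mulVecE A (s • x) = s • mulVecE A x := by
  ext i
  simp [mulVecE, PiLp.smul_apply, Finset.mul_sum, smul_eq_mul]
  congr 1; funext j; ring

noncomputable def mulVecL (A : Matrix (Fin n) (Fin n) ℝ) :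
    EuclideanSpace ℝ (Fin n) →ₗ[ℝ] EuclideanSpace ℝ (Fin n) where
  toFun := mulVecE A
  map_add' := mulVecE_add A
  map_smul' := fun s x => mulVecE_smul A s x

lemma continuous_mulVecE (A : Matrix (Fin n) (Fin n) ℝ) :
    Continuous (mulVecE A : EuclideanSpace ℝ (Fin n) → EuclideanSpace ℝ (Fin n)) :=
  (mulVecL A).continuous_of_finiteDimensional

lemma inner_mulVecE_symm (hA : A.IsSymm) (x y : EuclideanSpace ℝ (Fin n)) :
    ⟪mulVecE A x, y⟫_ℝ = ⟪mulVecE A y, x⟫_ℝ := by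
  simp only [PiLp.inner_apply, RCLike.inner_apply, starRingEnd_apply, star_trivial,
    mulVecE_apply, Finset.sum_mul, Finset.mul_sum]
  rw [Finset.sum_comm]
  apply Finset.sum_congr rfl; intro i _
  apply Finset.sum_congr rfl; intro j _
  have : A j i = A i j := by
    conv_lhs => rw [← hA]
    rfl
  rw [this]; ring

lemma quad_expand (hA : A.IsSymm) (u v : EuclideanSpace ℝ (Fin n)) (s t : ℝ) :
    ⟪mulVecE A (s • u + t • v), s • u + t • v⟫_ℝ =
      s ^ 2 * ⟪mulVecE A u, u⟫_ℝ + 2 * s * t * ⟪mulVecE A u, v⟫_ℝ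
        + t ^ 2 * ⟪mulVecE A v, v⟫_ℝ := by
  rw [mulVecE_add, mulVecE_smul, mulVecE_smul]
  rw [inner_add_left, inner_add_right, inner_add_right,
    real_inner_smul_left, real_inner_smul_left,
    real_inner_smul_right, real_inner_smul_right,
    real_inner_smul_left, real_inner_smul_left,
    real_inner_smul_right, real_inner_smul_right,
    inner_mulVecE_symm hA v u]
  ring

end helpers


lemma trig_max {a b c θd : ℝ} (hb : 0 < b) (hθd0 : 0 < θd) (hθdπ : θd ≤ π / 2)
    (hlt : arccos (((a - c) / 2) / Real.sqrt (((a - c) / 2) ^ 2 + b ^ 2)) / 2 < θd) :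
    (a < a * cos (arccos (((a - c) / 2) / Real.sqrt (((a - c) / 2) ^ 2 + b ^ 2)) / 2) ^ 2
        + 2 * b * sin (arccos (((a - c) / 2) / Real.sqrt (((a - c) / 2) ^ 2 + b ^ 2)) / 2)
            * cos (arccos (((a - c) / 2) / Real.sqrt (((a - c) / 2) ^ 2 + b ^ 2)) / 2)
        + c * sin (arccos (((a - c) / 2) / Real.sqrt (((a - c) / 2) ^ 2 + b ^ 2)) / 2) ^ 2)
    ∧ (a * cos θd ^ 2 + 2 * b * sin θd * cos θd + c * sin θd ^ 2 <
        a * cos (arccos (((a - c) / 2) / Real.sqrt (((a - c) / 2) ^ 2 + b ^ 2)) / 2) ^ 2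
        + 2 * b * sin (arccos (((a - c) / 2) / Real.sqrt (((a - c) / 2) ^ 2 + b ^ 2)) / 2)
            * cos (arccos (((a - c) / 2) / Real.sqrt (((a - c) / 2) ^ 2 + b ^ 2)) / 2)
        + c * sin (arccos (((a - c) / 2) / Real.sqrt (((a - c) / 2) ^ 2 + b ^ 2)) / 2) ^ 2) := by
  set P : ℝ := (a - c) / 2 with hP
  set R : ℝ := Real.sqrt (P ^ 2 + b ^ 2) with hRdef
  have hR : 0 < R := Real.sqrt_pos.mpr (by positivity)
  have hR2 : R ^ 2 = P ^ 2 + b ^ 2 := Real.sq_sqrt (by positivity)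
  have hPltR : P < R := by nlinarith
  have hnegR : -R < P := by nlinarith
  set φ : ℝ := arccos (P / R) with hφdef
  have hdiv1 : P / R < 1 := (div_lt_one hR).mpr hPltR
  have hdiv2 : -1 < P / R := by
    rw [neg_lt, ← neg_div]
    exact (div_lt_one hR).mpr (by linarith)
  have hcosφ : cos φ = P / R := cos_arccos (by linarith) (by linarith)
  have hsinφ : sin φ = b / R := by
    rw [hφdef, sin_arccos]
    have h1 : 1 - (P / R) ^ 2 = (b / R) ^ 2 := by
      field_simp
      linarith [hR2]
    rw [h1, Real.sqrt_sq (by positivity)]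
  have hφ0 : 0 < φ := arccos_pos.mpr hdiv1
  have hφπ : φ < π := by
    rcases lt_or_eq_of_le (arccos_le_pi (P / R)) with h | h
    · exact h
    · exfalso
      have : cos φ = -1 := by rw [hφdef, h, Real.cos_pi]
      rw [hcosφ] at this; linarith
  -- key identity
  have key : ∀ s : ℝ, a * cos s ^ 2 + 2 * b * sin s * cos s + c * sin s ^ 2
      = (a + c) / 2 + R * Real.cos (2 * s - φ) := by
    intro s
    rw [Real.cos_sub, Real.cos_two_mul, Real.sin_two_mul, hcosφ, hsinφ]
    have hs := Real.sin_sq_add_cos_sq s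
    field_simp
    linear_combination (2 * c) * hs + (2 - 4 * Real.cos s ^ 2) * hP
  have hθs : arccos (P / R) / 2 = φ / 2 := by rw [hφdef]
  rw [hθs]
  have hmax : a * cos (φ / 2) ^ 2 + 2 * b * sin (φ / 2) * cos (φ / 2) + c * sin (φ / 2) ^ 2
      = (a + c) / 2 + R := by
    rw [key]
    have : 2 * (φ / 2) - φ = 0 := by ring
    rw [this, Real.cos_zero, mul_one]
  have h0 : a = (a + c) / 2 + R * (P / R) := by
    have := key 0
    simpa [Real.cos_zero, Real.sin_zero, hcosφ] using this
  constructor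
  · rw [hmax, h0]
    have : R * (P / R) = P := by field_simp
    rw [this]
    linarith
  · rw [hmax, key θd]
    have hψ0 : 0 < 2 * θd - φ := by linarith
    have hψπ : 2 * θd - φ ≤ π := by linarith [pi_pos]
    have : cos (2 * θd - φ) < cos 0 :=
      cos_lt_cos_of_nonneg_of_le_pi le_rfl hψπ hψ0
    rw [Real.cos_zero] at this
    nlinarith

section cone

variable {n : ℕ} {K : Set (EuclideanSpace ℝ (Fin n))}

lemma smul_mem_interior (hcone : ∀ x ∈ K, ∀ t : ℝ, 0 < t → t • x ∈ K)
    {t : ℝ} (ht : 0 < t) {z : EuclideanSpace ℝ (Fin n)} (hz : z ∈ interior K) :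
    t • z ∈ interior K := by
  have himg : (fun w => t • w) '' interior K ⊆ K := by
    rintro _ ⟨w, hw, rfl⟩
    exact hcone w (interior_subset hw) t ht
  have hopen : IsOpen ((fun w => t • w) '' interior K) :=
    (isOpenMap_smul₀ (G₀ := ℝ) ht.ne') _ isOpen_interior
  exact interior_maximal himg hopen ⟨z, hz, rfl⟩

lemma add_mem_interior (hcone : ∀ x ∈ K, ∀ t : ℝ, 0 < t → t • x ∈ K)
    (hconvex : Convex ℝ K) {z₁ z₂ : EuclideanSpace ℝ (Fin n)}
    (h1 : z₁ ∈ K) (h2 : z₂ ∈ interior K) : z₁ + z₂ ∈ interior K := by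
  have hc : ((1:ℝ)/2) • z₁ + ((1:ℝ)/2) • z₂ ∈ interior K :=
    hconvex.combo_self_interior_mem_interior h1 h2 (by norm_num) (by norm_num) (by norm_num)
  have := smul_mem_interior hcone (t := 2) (by norm_num) hc
  have heq : (2:ℝ) • (((1:ℝ)/2) • z₁ + ((1:ℝ)/2) • z₂) = z₁ + z₂ := by
    rw [smul_add, smul_smul, smul_smul]; norm_num
  rwa [heq] at this

end cone

section aux

variable {n : ℕ}

lemma norm_combo_eq_one {u w : EuclideanSpace ℝ (Fin n)} (hu1 : ‖u‖ = 1) (hw1 : ‖w‖ = 1)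
    (huw : ⟪u, w⟫_ℝ = 0) {α β : ℝ} (hαβ : α ^ 2 + β ^ 2 = 1) : ‖α • u + β • w‖ = 1 := by
  have huu : ⟪u, u⟫_ℝ = 1 := by
    rw [real_inner_self_eq_norm_sq, hu1]; norm_num
  have hww : ⟪w, w⟫_ℝ = 1 := by
    rw [real_inner_self_eq_norm_sq, hw1]; norm_num
  have h : ⟪α • u + β • w, α • u + β • w⟫_ℝ = 1 := by
    rw [inner_add_left, inner_add_right, inner_add_right, real_inner_smul_left,
      real_inner_smul_left, real_inner_smul_left, real_inner_smul_left,
      real_inner_smul_right, real_inner_smul_right, real_inner_smul_right,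
      real_inner_smul_right, huu, hww, huw, real_inner_comm u w, huw]
    nlinarith
  have h2 : ‖α • u + β • w‖ ^ 2 = 1 := by
    rw [← real_inner_self_eq_norm_sq, h]
  nlinarith [norm_nonneg (α • u + β • w)]

set_option maxHeartbeats 2000000 in
lemma aux_contradiction (K : Set (EuclideanSpace ℝ (Fin n)))
    (hcone : ∀ x ∈ K, ∀ t : ℝ, 0 < t → t • x ∈ K) (hconvex : Convex ℝ K)
    (A : Matrix (Fin n) (Fin n) ℝ) (hA : A.IsSymm)
    (hq : SphQuasiConvexOn (Metric.sphere 0 1 ∩ interior K)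
      (fun x => ⟪mulVecE A x, x⟫_ℝ))
    (u w : EuclideanSpace ℝ (Fin n)) (hu1 : ‖u‖ = 1) (hw1 : ‖w‖ = 1)
    (huw : ⟪u, w⟫_ℝ = 0) (θd : ℝ) (hθ0 : 0 < θd) (hθπ : θd ≤ π / 2)
    (hu : u ∈ interior K) (hv : Real.cos θd • u + Real.sin θd • w ∈ interior K)
    (hb : 0 < ⟪mulVecE A u, w⟫_ℝ)
    (hlt : arccos (((⟪mulVecE A u, u⟫_ℝ - ⟪mulVecE A w, w⟫_ℝ) / 2) /
        Real.sqrt ((((⟪mulVecE A u, u⟫_ℝ - ⟪mulVecE A w, w⟫_ℝ) / 2)) ^ 2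
          + ⟪mulVecE A u, w⟫_ℝ ^ 2)) / 2 < θd) :
    False := by
  set a : ℝ := ⟪mulVecE A u, u⟫_ℝ with ha
  set b : ℝ := ⟪mulVecE A u, w⟫_ℝ with hbdef
  set c : ℝ := ⟪mulVecE A w, w⟫_ℝ with hc
  set v : EuclideanSpace ℝ (Fin n) := Real.cos θd • u + Real.sin θd • w with hvdef
  have hπ := Real.pi_pos
  have huu : ⟪u, u⟫_ℝ = 1 := by
    rw [real_inner_self_eq_norm_sq, hu1]; norm_num
  have huv : ⟪u, v⟫_ℝ = Real.cos θd := by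
    rw [hvdef, inner_add_right, real_inner_smul_right, real_inner_smul_right, huu, huw]
    ring
  have hv1 : ‖v‖ = 1 :=
    norm_combo_eq_one hu1 hw1 huw (by nlinarith [Real.sin_sq_add_cos_sq θd])
  have hρ0 : 0 ≤ Real.cos θd := Real.cos_nonneg_of_mem_Icc ⟨by linarith, hθπ⟩
  have hρ1 : Real.cos θd < 1 := by
    have := Real.cos_lt_cos_of_nonneg_of_le_pi le_rfl (by linarith) hθ0
    rwa [Real.cos_zero] at this
  have hsin0 : 0 < Real.sin θd := Real.sin_pos_of_pos_of_lt_pi hθ0 (by linarith)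
  have hσ : Real.sqrt (1 - Real.cos θd ^ 2) = Real.sin θd := by
    have h1 : 1 - Real.cos θd ^ 2 = Real.sin θd ^ 2 := by
      nlinarith [Real.sin_sq_add_cos_sq θd]
    rw [h1, Real.sqrt_sq hsin0.le]
  have harc : arccos ⟪u, v⟫_ℝ = θd := by
    rw [huv, Real.arccos_cos hθ0.le (by linarith)]
  have hgeo : ∀ t : ℝ, geoSeg u v t = Real.cos (t * θd) • u + Real.sin (t * θd) • w := by
    intro t
    rw [geoSeg, harc, huv, hσ, hvdef]
    match_scalars
    · field_simp
      ring
    · field_simp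
  have hne : v ≠ -u := by
    intro h
    have : ⟪u, v⟫_ℝ = -1 := by
      rw [h, inner_neg_right, huu]
    rw [huv] at this; linarith
  have hIsMin : IsMinGeodesic (geoSeg u v) u v := ⟨hu1, hv1, Or.inl ⟨hne, rfl⟩⟩
  have hmem : ∀ t ∈ Set.Icc (0:ℝ) 1, geoSeg u v t ∈ Metric.sphere (0 : EuclideanSpace ℝ (Fin n)) 1 ∩ interior K := by
    intro t ht
    rw [hgeo t]
    constructor
    · rw [mem_sphere_zero_iff_norm]
      exact norm_combo_eq_one hu1 hw1 huw
        (by nlinarith [Real.sin_sq_add_cos_sq (t * θd)])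
    · rcases eq_or_lt_of_le ht.1 with h0 | h0
      · rw [← h0]
        simpa using hu
      · -- t > 0 :  express as combination of u and v
        have hs0 : 0 < t * θd := mul_pos h0 hθ0
        have hsd : t * θd ≤ θd := by
          nlinarith [ht.2]
        have hkey : Real.cos (t * θd) • u + Real.sin (t * θd) • w
            = (Real.sin (θd - t * θd) / Real.sin θd) • u
              + (Real.sin (t * θd) / Real.sin θd) • v := by
          rw [hvdef, Real.sin_sub]
          match_scalars
          · field_simp
            ring
          · field_simp
        rw [hkey]
        have hc2 : 0 < Real.sin (t * θd) / Real.sin θd :=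
          div_pos (Real.sin_pos_of_pos_of_lt_pi hs0 (by linarith)) hsin0
        have hc1 : 0 ≤ Real.sin (θd - t * θd) / Real.sin θd := by
          apply div_nonneg _ hsin0.le
          apply Real.sin_nonneg_of_nonneg_of_le_pi (by linarith) (by linarith)
        have hv2 : (Real.sin (t * θd) / Real.sin θd) • v ∈ interior K :=
          smul_mem_interior hcone hc2 hv
        rcases eq_or_lt_of_le hc1 with hc10 | hc10
        · rw [← hc10, zero_smul, zero_add]
          exact hv2
        · exact add_mem_interior hcone hconvex
            (hcone u (interior_subset hu) _ hc10) hv2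
  -- apply quasiconvexity
  set θs : ℝ := arccos ((a - c) / 2 / Real.sqrt (((a - c) / 2) ^ 2 + b ^ 2)) / 2 with hθs
  have hθs0 : 0 ≤ θs := by
    rw [hθs]
    have := Real.arccos_nonneg ((a - c) / 2 / Real.sqrt (((a - c) / 2) ^ 2 + b ^ 2))
    linarith
  have happ := hq u ⟨mem_sphere_zero_iff_norm.mpr hu1, hu⟩
    v ⟨mem_sphere_zero_iff_norm.mpr hv1, hv⟩ (geoSeg u v) hIsMin hmem
    0 (θs / θd) 1 le_rfl (div_nonneg hθs0 hθ0.le) (by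
      rw [div_le_one hθ0]; exact hlt.le) le_rfl
  have hγ0 : geoSeg u v 0 = u := by
    rw [hgeo 0]
    simp
  have hγ1 : geoSeg u v 1 = v := by
    rw [hgeo 1, one_mul, hvdef]
  have hγt : geoSeg u v (θs / θd) = Real.cos θs • u + Real.sin θs • w := by
    rw [hgeo (θs / θd), div_mul_cancel₀ _ hθ0.ne']
  rw [hγ0, hγ1, hγt] at happ
  have hqu : ⟪mulVecE A u, u⟫_ℝ = a := rfl
  have hqv : ⟪mulVecE A v, v⟫_ℝ
      = a * Real.cos θd ^ 2 + 2 * b * Real.sin θd * Real.cos θd + c * Real.sin θd ^ 2 := by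
    rw [hvdef, quad_expand hA]
    ring
  have hqt : ⟪mulVecE A (Real.cos θs • u + Real.sin θs • w), Real.cos θs • u + Real.sin θs • w⟫_ℝ
      = a * Real.cos θs ^ 2 + 2 * b * Real.sin θs * Real.cos θs + c * Real.sin θs ^ 2 := by
    rw [quad_expand hA]
    ring
  have htrig := trig_max hb hθ0 hθπ hlt
  rw [← hθs] at htrig
  simp only [hqt, hqu, hqv] at happ
  rcases le_max_iff.mp happ with h | h
  · linarith [htrig.1]
  · linarith [htrig.2]

end aux

set_option maxHeartbeats 2000000 in
/-- For a self-dual proper cone `K ⊆ ℝⁿ` and a symmetric matrix `A`, if the quadratic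
function `q_A(x) = ⟪Ax, x⟫` is spherically quasi-convex on `C = 𝕊^{n-1} ∩ int K`, then `A`
has the `K`-Z-property: `⟪Ax, y⟫ ≤ 0` whenever `x ∈ K`, `y ∈ K*` and `⟪x, y⟫ = 0`. -/
theorem quadratic_sph_quasiconvex_implies_Z_property {n : ℕ}
    (K : Set (EuclideanSpace ℝ (Fin n)))
    (hcone : ∀ x ∈ K, ∀ t : ℝ, 0 < t → t • x ∈ K)
    (hclosed : IsClosed K) (hconvex : Convex ℝ K)
    (hpointed : K ∩ (-K) ⊆ {0}) (hint : (interior K).Nonempty)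
    (hselfdual : K = {x | ∀ y ∈ K, 0 ≤ ⟪x, y⟫_ℝ})
    (A : Matrix (Fin n) (Fin n) ℝ) (hA : A.IsSymm)
    (hq : SphQuasiConvexOn (Metric.sphere 0 1 ∩ interior K)
      (fun x => ⟪mulVecE A x, x⟫_ℝ)) :
    ∀ x ∈ K, ∀ y ∈ {z | ∀ w ∈ K, 0 ≤ ⟪z, w⟫_ℝ}, ⟪x, y⟫_ℝ = 0 →
      ⟪mulVecE A x, y⟫_ℝ ≤ 0 := by
  intro x hx y hy hxy
  by_cases hx0 : x = 0
  · have : mulVecE A x = 0 := by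
      ext i
      simp [mulVecE, hx0]
    rw [this, inner_zero_left]
  by_cases hy0 : y = 0
  · rw [hy0, inner_zero_right]
  have hyK : y ∈ K := by
    rw [hselfdual]; exact hy
  have hxn : (0:ℝ) < ‖x‖ := norm_pos_iff.mpr hx0
  have hyn : (0:ℝ) < ‖y‖ := norm_pos_iff.mpr hy0
  set x' : EuclideanSpace ℝ (Fin n) := ‖x‖⁻¹ • x with hx'def
  set y' : EuclideanSpace ℝ (Fin n) := ‖y‖⁻¹ • y with hy'def
  have hx'K : x' ∈ K := hcone x hx _ (inv_pos.mpr hxn)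
  have hy'K : y' ∈ K := hcone y hyK _ (inv_pos.mpr hyn)
  have hx'1 : ‖x'‖ = 1 := norm_smul_inv_norm hx0
  have hy'1 : ‖y'‖ = 1 := norm_smul_inv_norm hy0
  have hxy' : ⟪x', y'⟫_ℝ = 0 := by
    rw [hx'def, hy'def, real_inner_smul_left, real_inner_smul_right, hxy]
    ring
  suffices h : ⟪mulVecE A x', y'⟫_ℝ ≤ 0 by
    have heq : ⟪mulVecE A x', y'⟫_ℝ = ‖x‖⁻¹ * (‖y‖⁻¹ * ⟪mulVecE A x, y⟫_ℝ) := by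
      rw [hx'def, hy'def, mulVecE_smul, real_inner_smul_left, real_inner_smul_right]
    rw [heq] at h
    have h2 := mul_le_mul_of_nonneg_left h (le_of_lt (mul_pos hxn hyn))
    rw [mul_zero] at h2
    calc ⟪mulVecE A x, y⟫_ℝ
        = ‖x‖ * ‖y‖ * (‖x‖⁻¹ * (‖y‖⁻¹ * ⟪mulVecE A x, y⟫_ℝ)) := by
          field_simp
      _ ≤ 0 := h2
  by_contra hcon
  push_neg at hcon
  -- now 0 < ⟪A x', y'⟫; derive a contradiction
  obtain ⟨e, he⟩ := hint
  have heK : e ∈ K := interior_subset he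
  set b₀ : ℝ := ⟪mulVecE A x', y'⟫_ℝ with hb₀
  set a₀ : ℝ := ⟪mulVecE A x', x'⟫_ℝ with ha₀
  set c₀ : ℝ := ⟪mulVecE A y', y'⟫_ℝ with hc₀
  -- the approximating families
  set X : ℝ → EuclideanSpace ℝ (Fin n) := fun ε => x' + ε • e with hX
  set Y : ℝ → EuclideanSpace ℝ (Fin n) := fun ε => y' + ε • e with hY
  set U : ℝ → EuclideanSpace ℝ (Fin n) := fun ε => ‖X ε‖⁻¹ • X ε with hU
  set V : ℝ → EuclideanSpace ℝ (Fin n) := fun ε => ‖Y ε‖⁻¹ • Y ε with hV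
  set ρ : ℝ → ℝ := fun ε => ⟪U ε, V ε⟫_ℝ with hρdef
  set σ : ℝ → ℝ := fun ε => Real.sqrt (1 - ρ ε ^ 2) with hσdef
  set W : ℝ → EuclideanSpace ℝ (Fin n) := fun ε => (σ ε)⁻¹ • (V ε - ρ ε • U ε) with hW
  -- limits as ε → 0⁺
  have hXt : Filter.Tendsto X (nhdsWithin 0 (Set.Ioi 0)) (nhds x') := by
    apply Filter.Tendsto.mono_left _ nhdsWithin_le_nhds
    have : Filter.Tendsto (fun ε : ℝ => x' + ε • e) (nhds 0) (nhds (x' + (0:ℝ) • e)) :=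
      (tendsto_const_nhds.add ((continuous_id.smul continuous_const).tendsto 0))
    simpa using this
  have hYt : Filter.Tendsto Y (nhdsWithin 0 (Set.Ioi 0)) (nhds y') := by
    apply Filter.Tendsto.mono_left _ nhdsWithin_le_nhds
    have : Filter.Tendsto (fun ε : ℝ => y' + ε • e) (nhds 0) (nhds (y' + (0:ℝ) • e)) :=
      (tendsto_const_nhds.add ((continuous_id.smul continuous_const).tendsto 0))
    simpa using this
  have hUt : Filter.Tendsto U (nhdsWithin 0 (Set.Ioi 0)) (nhds x') := by
    have hnz : ‖x'‖ ≠ 0 := by rw [hx'1]; norm_num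
    have h1 : Filter.Tendsto (fun ε => ‖X ε‖⁻¹ • X ε) (nhdsWithin 0 (Set.Ioi 0))
        (nhds (‖x'‖⁻¹ • x')) := ((hXt.norm).inv₀ hnz).smul hXt
    rw [hx'1] at h1
    simpa using h1
  have hVt : Filter.Tendsto V (nhdsWithin 0 (Set.Ioi 0)) (nhds y') := by
    have hnz : ‖y'‖ ≠ 0 := by rw [hy'1]; norm_num
    have h1 : Filter.Tendsto (fun ε => ‖Y ε‖⁻¹ • Y ε) (nhdsWithin 0 (Set.Ioi 0))
        (nhds (‖y'‖⁻¹ • y')) := ((hYt.norm).inv₀ hnz).smul hYt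
    rw [hy'1] at h1
    simpa using h1
  have hρt : Filter.Tendsto ρ (nhdsWithin 0 (Set.Ioi 0)) (nhds 0) := by
    have := Filter.Tendsto.inner (𝕜 := ℝ) hUt hVt
    rwa [hxy'] at this
  have hσt : Filter.Tendsto σ (nhdsWithin 0 (Set.Ioi 0)) (nhds 1) := by
    have h1 : Filter.Tendsto (fun ε => 1 - ρ ε ^ 2) (nhdsWithin 0 (Set.Ioi 0)) (nhds 1) := by
      have := (tendsto_const_nhds (x := (1:ℝ))).sub (hρt.pow 2)
      simpa using this
    have h2 := (Real.continuous_sqrt.tendsto 1).comp h1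
    rw [Real.sqrt_one] at h2
    exact h2
  have hWt : Filter.Tendsto W (nhdsWithin 0 (Set.Ioi 0)) (nhds y') := by
    have h1 : Filter.Tendsto (fun ε => V ε - ρ ε • U ε) (nhdsWithin 0 (Set.Ioi 0))
        (nhds (y' - (0:ℝ) • x')) := hVt.sub (hρt.smul hUt)
    have h2 := ((hσt.inv₀ one_ne_zero).smul h1 :)
    simp only [inv_one, one_smul, zero_smul, sub_zero] at h2
    exact h2
  have hAmul : ∀ z : EuclideanSpace ℝ (Fin n),
      Filter.Tendsto (fun p : EuclideanSpace ℝ (Fin n) => mulVecE A p) (nhds z)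
        (nhds (mulVecE A z)) := fun z => (continuous_mulVecE A).tendsto z
  have hat : Filter.Tendsto (fun ε => ⟪mulVecE A (U ε), U ε⟫_ℝ)
      (nhdsWithin 0 (Set.Ioi 0)) (nhds a₀) := Filter.Tendsto.inner (𝕜 := ℝ) ((hAmul x').comp hUt) hUt
  have hbt : Filter.Tendsto (fun ε => ⟪mulVecE A (U ε), W ε⟫_ℝ)
      (nhdsWithin 0 (Set.Ioi 0)) (nhds b₀) := Filter.Tendsto.inner (𝕜 := ℝ) ((hAmul x').comp hUt) hWt
  have hct : Filter.Tendsto (fun ε => ⟪mulVecE A (W ε), W ε⟫_ℝ)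
      (nhdsWithin 0 (Set.Ioi 0)) (nhds c₀) := Filter.Tendsto.inner (𝕜 := ℝ) ((hAmul y').comp hWt) hWt
  have hθdt : Filter.Tendsto (fun ε => Real.arccos (ρ ε)) (nhdsWithin 0 (Set.Ioi 0))
      (nhds (π / 2)) := by
    have := (Real.continuous_arccos.tendsto 0).comp hρt
    rwa [Real.arccos_zero] at this
  -- the comparison angle
  set P₀ : ℝ := (a₀ - c₀) / 2 with hP₀
  set R₀ : ℝ := Real.sqrt (P₀ ^ 2 + b₀ ^ 2) with hR₀def
  have hR₀ : 0 < R₀ := Real.sqrt_pos.mpr (by positivity)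
  have hR₀2 : R₀ ^ 2 = P₀ ^ 2 + b₀ ^ 2 := Real.sq_sqrt (by positivity)
  have hPltR : P₀ < R₀ := by nlinarith
  have hnegR : -R₀ < P₀ := by nlinarith
  have hdiv2 : -1 < P₀ / R₀ := by
    rw [neg_lt, ← neg_div]
    exact (div_lt_one hR₀).mpr (by linarith)
  have hdiv1 : P₀ / R₀ ≤ 1 := by
    rw [div_le_one hR₀]; linarith
  have hLpi : Real.arccos (P₀ / R₀) < π := by
    rcases lt_or_eq_of_le (Real.arccos_le_pi (P₀ / R₀)) with h | h
    · exact h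
    · exfalso
      have h2 : Real.cos (Real.arccos (P₀ / R₀)) = P₀ / R₀ :=
        Real.cos_arccos (by linarith) hdiv1
      rw [h, Real.cos_pi] at h2
      linarith
  have hLhalf : Real.arccos (P₀ / R₀) / 2 < π / 2 := by linarith
  have hΘt : Filter.Tendsto (fun ε =>
      Real.arccos (((⟪mulVecE A (U ε), U ε⟫_ℝ - ⟪mulVecE A (W ε), W ε⟫_ℝ) / 2) /
        Real.sqrt ((((⟪mulVecE A (U ε), U ε⟫_ℝ - ⟪mulVecE A (W ε), W ε⟫_ℝ) / 2)) ^ 2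
          + ⟪mulVecE A (U ε), W ε⟫_ℝ ^ 2)) / 2)
      (nhdsWithin 0 (Set.Ioi 0)) (nhds (Real.arccos (P₀ / R₀) / 2)) := by
    have h1 : Filter.Tendsto (fun ε => (⟪mulVecE A (U ε), U ε⟫_ℝ - ⟪mulVecE A (W ε), W ε⟫_ℝ) / 2)
        (nhdsWithin 0 (Set.Ioi 0)) (nhds P₀) := (hat.sub hct).div_const 2
    have h2 := ((h1.pow 2).add (hbt.pow 2))
    have h3 := (Real.continuous_sqrt.tendsto (P₀ ^ 2 + b₀ ^ 2)).comp h2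
    have h4 := h1.div h3 (by rw [← hR₀def] at *; exact hR₀.ne')
    have h5 := (Real.continuous_arccos.tendsto (P₀ / R₀)).comp h4
    exact h5.div_const 2
  -- eventual facts
  have E1 : ∀ᶠ ε in nhdsWithin 0 (Set.Ioi 0), 0 < ⟪mulVecE A (U ε), W ε⟫_ℝ :=
    hbt.eventually_const_lt hcon
  have E2 : ∀ᶠ ε in nhdsWithin 0 (Set.Ioi 0), ρ ε < 1 :=
    hρt.eventually_lt_const (by norm_num)
  have E3 : ∀ᶠ ε in nhdsWithin 0 (Set.Ioi 0),
      Real.arccos (((⟪mulVecE A (U ε), U ε⟫_ℝ - ⟪mulVecE A (W ε), W ε⟫_ℝ) / 2) /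
        Real.sqrt ((((⟪mulVecE A (U ε), U ε⟫_ℝ - ⟪mulVecE A (W ε), W ε⟫_ℝ) / 2)) ^ 2
          + ⟪mulVecE A (U ε), W ε⟫_ℝ ^ 2)) / 2 < Real.arccos (ρ ε) :=
    hΘt.eventually_lt hθdt hLhalf
  have E0 : ∀ᶠ ε in nhdsWithin 0 (Set.Ioi 0), ε ∈ Set.Ioi (0:ℝ) :=
    eventually_mem_nhdsWithin
  obtain ⟨ε, hεall⟩ := (E0.and (E1.and (E2.and E3))).exists
  obtain ⟨hε0', hεb, hερ, hεΘ⟩ : ε ∈ Set.Ioi (0:ℝ) ∧ _ ∧ _ ∧ _ :=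
    ⟨hεall.1, hεall.2.1, hεall.2.2.1, hεall.2.2.2⟩
  have hε0 : 0 < ε := hε0'
  -- pointwise facts at ε
  have hXint : X ε ∈ interior K :=
    add_mem_interior hcone hconvex hx'K (smul_mem_interior hcone hε0 he)
  have hYint : Y ε ∈ interior K :=
    add_mem_interior hcone hconvex hy'K (smul_mem_interior hcone hε0 he)
  have hXne : X ε ≠ 0 := by
    intro h
    have hex : 0 ≤ ⟪e, x'⟫_ℝ := by
      rw [hselfdual] at heK
      exact heK x' hx'K
    have h1 : ⟪X ε, x'⟫_ℝ = 1 + ε * ⟪e, x'⟫_ℝ := by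
      have hx'self : ⟪x', x'⟫_ℝ = 1 := by
        rw [real_inner_self_eq_norm_sq, hx'1]; norm_num
      simp only [hX]
      rw [inner_add_left, real_inner_smul_left e x' ε, hx'self]
    rw [h, inner_zero_left] at h1
    nlinarith
  have hYne : Y ε ≠ 0 := by
    intro h
    have hey : 0 ≤ ⟪e, y'⟫_ℝ := by
      rw [hselfdual] at heK
      exact heK y' hy'K
    have h1 : ⟪Y ε, y'⟫_ℝ = 1 + ε * ⟪e, y'⟫_ℝ := by
      have hy'self : ⟪y', y'⟫_ℝ = 1 := by
        rw [real_inner_self_eq_norm_sq, hy'1]; norm_num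
      simp only [hY]
      rw [inner_add_left, real_inner_smul_left e y' ε, hy'self]
    rw [h, inner_zero_left] at h1
    nlinarith
  have hU1 : ‖U ε‖ = 1 := norm_smul_inv_norm hXne
  have hV1 : ‖V ε‖ = 1 := norm_smul_inv_norm hYne
  have hUint : U ε ∈ interior K :=
    smul_mem_interior hcone (inv_pos.mpr (norm_pos_iff.mpr hXne)) hXint
  have hVint : V ε ∈ interior K :=
    smul_mem_interior hcone (inv_pos.mpr (norm_pos_iff.mpr hYne)) hYint
  have hρ0 : 0 ≤ ρ ε := by
    have hUK : U ε ∈ K := interior_subset hUint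
    rw [hselfdual] at hUK
    exact hUK (V ε) (interior_subset hVint)
  have hσpos : 0 < σ ε := Real.sqrt_pos.mpr (by nlinarith [hερ, hρ0])
  have hσ2 : σ ε ^ 2 = 1 - ρ ε ^ 2 := Real.sq_sqrt (by nlinarith [hερ, hρ0])
  have hUU : ⟪U ε, U ε⟫_ℝ = 1 := by
    rw [real_inner_self_eq_norm_sq, hU1]; norm_num
  have hVV : ⟪V ε, V ε⟫_ℝ = 1 := by
    rw [real_inner_self_eq_norm_sq, hV1]; norm_num
  have hUW : ⟪U ε, W ε⟫_ℝ = 0 := by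
    simp only [hW]
    rw [real_inner_smul_right (U ε) (V ε - ρ ε • U ε) (σ ε)⁻¹, inner_sub_right,
      real_inner_smul_right (U ε) (U ε) (ρ ε), hUU]
    simp only [hρdef]
    ring
  have hW1 : ‖W ε‖ = 1 := by
    have h1 : ⟪W ε, W ε⟫_ℝ = 1 := by
      have hsub : ⟪V ε - ρ ε • U ε, V ε - ρ ε • U ε⟫_ℝ = 1 - ρ ε ^ 2 := by
        rw [real_inner_sub_sub_self, real_inner_smul_right (V ε) (U ε) (ρ ε),
          real_inner_smul_left (U ε) (ρ ε • U ε) (ρ ε),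
          real_inner_smul_right (U ε) (U ε) (ρ ε),
          hVV, hUU, real_inner_comm (U ε) (V ε)]
        simp only [hρdef]
        ring
      simp only [hW]
      rw [real_inner_smul_left (V ε - ρ ε • U ε) ((σ ε)⁻¹ • (V ε - ρ ε • U ε)) (σ ε)⁻¹,
        real_inner_smul_right (V ε - ρ ε • U ε) (V ε - ρ ε • U ε) (σ ε)⁻¹, hsub, ← hσ2]
      field_simp
    have h2 : ‖W ε‖ ^ 2 = 1 := by rw [← real_inner_self_eq_norm_sq, h1]
    nlinarith [norm_nonneg (W ε)]
  have hcosρ : Real.cos (Real.arccos (ρ ε)) = ρ ε :=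
    Real.cos_arccos (by linarith) hερ.le
  have hsinρ : Real.sin (Real.arccos (ρ ε)) = σ ε := by
    rw [Real.sin_arccos, hσdef]
  have hvcomb : Real.cos (Real.arccos (ρ ε)) • U ε + Real.sin (Real.arccos (ρ ε)) • W ε
      = V ε := by
    rw [hcosρ, hsinρ]
    simp only [hW]
    rw [smul_smul (σ ε) ((σ ε)⁻¹) (V ε - ρ ε • U ε), mul_inv_cancel₀ hσpos.ne', one_smul]
    abel
  have hθd0 : 0 < Real.arccos (ρ ε) := Real.arccos_pos.mpr hερ
  have hθdπ : Real.arccos (ρ ε) ≤ π / 2 := Real.arccos_le_pi_div_two.mpr hρ0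
  exact aux_contradiction K hcone hconvex A hA hq (U ε) (W ε) hU1 hW1 hUW
    (Real.arccos (ρ ε)) hθd0 hθdπ hUint (hvcomb ▸ hVint) hεb hεΘ
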